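/- Let B be a bialgebra over a commutative ring R and let v : B → R be an ε-derivation, i.e. v ∘ μ = v ⊗ ε + ε ⊗ v. Then the convolution X = id ⋆ v = μ ∘ (id ⊗ v) ∘ Δ (using R ⊗ B ≅ B) is a derivation of B which is left-invariant, i.e. X ∘ μ = μ ∘ (X ⊗ id + id ⊗ X) and (id ⊗ X) ∘ Δ = Δ ∘ X, and moreover ε ∘ X = v. -/
import Mathlib


open TensorProduct

section

variable {R B : Type*} [CommRing R] [Ring B] [Bialgebra R B]

/-- A derivation of the bialgebra `B`: `X ∘ μ = μ ∘ (X ⊗ id + id ⊗ X)`. -/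
def IsDerivation (X : B →ₗ[R] B) : Prop :=
  X ∘ₗ LinearMap.mul' R B =
    LinearMap.mul' R B ∘ₗ
      (TensorProduct.map X LinearMap.id + TensorProduct.map LinearMap.id X)

/-- A left-invariant linear map of the bialgebra `B`: `(id ⊗ X) ∘ Δ = Δ ∘ X`. -/
def IsLeftInvariant (X : B →ₗ[R] B) : Prop :=
  TensorProduct.map LinearMap.id X ∘ₗ Coalgebra.comul = Coalgebra.comul ∘ₗ X

/-- An `ε`-derivation of `B` valued in `R`: `v(fg) = v(f)ε(g) + ε(f)v(g)`. -/
def IsEpsDerivation (v : B →ₗ[R] R) : Prop :=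
  ∀ f g : B, v (f * g) = v f * Coalgebra.counit g + Coalgebra.counit f * v g

/-- The convolution `id ⋆ v = μ ∘ (id ⊗ v) ∘ Δ` (using `B ⊗ R ≃ B`); the left translation
of `v`. -/
noncomputable def leftTranslation (v : B →ₗ[R] R) : B →ₗ[R] B :=
  (TensorProduct.rid R B).toLinearMap ∘ₗ
    TensorProduct.map LinearMap.id v ∘ₗ Coalgebra.comul

/-- If `v : B → R` is an `ε`-derivation, then `X = id ⋆ v` is a
left-invariant derivation of `B` with `ε ∘ X = v`. -/
theorem leftTranslation_is_left_invariant_derivation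
    (v : B →ₗ[R] R) (hv : IsEpsDerivation v) :
    IsDerivation (leftTranslation v) ∧ IsLeftInvariant (leftTranslation v) ∧
      Coalgebra.counit ∘ₗ leftTranslation v = v := by
  have hcr : ∀ b : B, TensorProduct.map (Coalgebra.counit : B →ₗ[R] R) LinearMap.id
      (Coalgebra.comul b) = (1 : R) ⊗ₜ[R] b := fun b =>
    LinearMap.congr_fun (Coalgebra.rTensor_counit_comp_comul (R := R) (A := B)) b
  have hcl : ∀ b : B, TensorProduct.map LinearMap.id (Coalgebra.counit : B →ₗ[R] R)
      (Coalgebra.comul b) = b ⊗ₜ[R] (1 : R) := fun b =>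
    LinearMap.congr_fun (Coalgebra.lTensor_counit_comp_comul (R := R) (A := B)) b
  have hXapp : ∀ b : B, leftTranslation v b =
      (TensorProduct.rid R B) (TensorProduct.map LinearMap.id v (Coalgebra.comul b)) := fun _ => rfl
  have key : ∀ a b : B ⊗[R] B,
      (TensorProduct.rid R B) (TensorProduct.map LinearMap.id v (a * b)) =
        (TensorProduct.rid R B) (TensorProduct.map LinearMap.id v a) *
          (TensorProduct.rid R B) (TensorProduct.map LinearMap.id (Coalgebra.counit : B →ₗ[R] R) b) +
        (TensorProduct.rid R B) (TensorProduct.map LinearMap.id (Coalgebra.counit : B →ₗ[R] R) a) *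
          (TensorProduct.rid R B) (TensorProduct.map LinearMap.id v b) := by
    intro a b
    induction a using TensorProduct.induction_on with
    | zero => simp
    | add a₁ a₂ ih1 ih2 => simp only [add_mul, map_add, ih1, ih2]; abel
    | tmul x y =>
      induction b using TensorProduct.induction_on with
      | zero => simp
      | add b₁ b₂ ih1 ih2 => simp only [mul_add, map_add, ih1, ih2]; abel
      | tmul x' y' =>
        simp only [Algebra.TensorProduct.tmul_mul_tmul, TensorProduct.map_tmul,
          LinearMap.id_coe, id_eq, TensorProduct.rid_tmul, hv y y', add_smul,
          smul_mul_assoc, mul_smul_comm, smul_smul]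
        rw [mul_comm (v y), mul_comm ((Coalgebra.counit : B →ₗ[R] R) y) (v y')]
  refine ⟨?_, ?_, ?_⟩
  · apply TensorProduct.ext'
    intro f g
    simp only [LinearMap.coe_comp, Function.comp_apply, LinearMap.mul'_apply,
      LinearMap.add_apply, TensorProduct.map_tmul, LinearMap.id_coe, id_eq, map_add]
    rw [hXapp, Bialgebra.comul_mul, key, hcl f, hcl g]
    simp [hXapp]
  · apply LinearMap.ext
    intro b
    have h1 : ∀ t : B ⊗[R] B,
        Coalgebra.comul ((TensorProduct.rid R B) (TensorProduct.map LinearMap.id v t)) =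
          (TensorProduct.rid R (B ⊗[R] B))
            (TensorProduct.map LinearMap.id v
              (TensorProduct.map Coalgebra.comul LinearMap.id t)) := by
      intro t
      induction t using TensorProduct.induction_on with
      | zero => simp
      | add t₁ t₂ ih1 ih2 => simp only [map_add, ih1, ih2]
      | tmul x y =>
        simp only [TensorProduct.map_tmul, LinearMap.id_coe, id_eq, TensorProduct.rid_tmul,
          map_smul]
    have h3 : ∀ s : (B ⊗[R] B) ⊗[R] B,
        TensorProduct.map LinearMap.id (TensorProduct.rid R B).toLinearMap
          (TensorProduct.map LinearMap.id (TensorProduct.map LinearMap.id v)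
            ((TensorProduct.assoc R B B B) s)) =
          (TensorProduct.rid R (B ⊗[R] B)) (TensorProduct.map LinearMap.id v s) := by
      intro s
      induction s using TensorProduct.induction_on with
      | zero => simp
      | add s₁ s₂ ih1 ih2 => simp only [map_add, ih1, ih2]
      | tmul t z =>
        induction t using TensorProduct.induction_on with
        | zero => simp
        | add t₁ t₂ ih1 ih2 => simp only [TensorProduct.add_tmul, map_add, ih1, ih2]
        | tmul x y =>
          simp only [TensorProduct.assoc_tmul, TensorProduct.map_tmul, LinearMap.id_coe, id_eq,
            LinearEquiv.coe_coe, TensorProduct.rid_tmul, TensorProduct.tmul_smul]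
    have coas := Coalgebra.coassoc_apply (R := R) (A := B) b
    have hfun : TensorProduct.map (LinearMap.id : B →ₗ[R] B) (leftTranslation v) =
        TensorProduct.map LinearMap.id (TensorProduct.rid R B).toLinearMap ∘ₗ
          TensorProduct.map LinearMap.id (TensorProduct.map LinearMap.id v) ∘ₗ
            TensorProduct.map LinearMap.id Coalgebra.comul := by
      rw [← TensorProduct.map_comp, ← TensorProduct.map_comp]
      rfl
    rw [LinearMap.comp_apply, LinearMap.comp_apply, hfun]
    rw [LinearMap.comp_apply, LinearMap.comp_apply]
    rw [show TensorProduct.map (LinearMap.id : B →ₗ[R] B) Coalgebra.comul (Coalgebra.comul b)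
        = (Coalgebra.comul (R := R)).lTensor B (Coalgebra.comul b) from rfl, ← coas]
    rw [show (LinearMap.rTensor B (Coalgebra.comul (R := R))) (Coalgebra.comul b)
        = TensorProduct.map Coalgebra.comul LinearMap.id (Coalgebra.comul b) from rfl]
    rw [h3, hXapp, h1]
  · apply LinearMap.ext
    intro b
    have h4 : ∀ t : B ⊗[R] B,
        (Coalgebra.counit : B →ₗ[R] R)
            ((TensorProduct.rid R B) (TensorProduct.map LinearMap.id v t)) =
          v ((TensorProduct.lid R B)
            (TensorProduct.map (Coalgebra.counit : B →ₗ[R] R) LinearMap.id t)) := by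
      intro t
      induction t using TensorProduct.induction_on with
      | zero => simp
      | add t₁ t₂ ih1 ih2 => simp only [map_add, ih1, ih2]
      | tmul x y =>
        simp only [TensorProduct.map_tmul, LinearMap.id_coe, id_eq, TensorProduct.rid_tmul,
          TensorProduct.lid_tmul, map_smul, smul_eq_mul, mul_comm]
    rw [LinearMap.comp_apply, hXapp, h4, hcr]
    simp

end
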